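/- arXiv:1311.3529 — 2 statements merged into one kernel-verified Lean document; each statement's English description precedes it below -/
import Mathlib

section
/- Let 𝒥 be a nonempty family of 𝓕-measurable functions Ω → (−∞,∞] that is directed downwards, i.e. for all J₁, J₂ ∈ 𝒥 there exists J₃ ∈ 𝒥 with J₃ ≤ min(J₁, J₂) P-a.s. Assume each J ∈ 𝒥 has integrable negative part (so E_P[J] ∈ (−∞,∞] is well defined) and that there exists J₀ ∈ 𝒥 with E_P[J₀] < ∞. Then there exists a sequence (J_n) in 𝒥 which is P-a.s. nonincreasing such that its P-a.s. pointwise limit h satisfies: (i) h ≤ J P-a.s. for every J ∈ 𝒥; (ii) every 𝓕-measurable extended-real h′ with h′ ≤ J P-a.s. for all J ∈ 𝒥 satisfies h′ ≤ h P-a.s.; and (iii) E_P[h] = inf_{J ∈ 𝒥} E_P[J], where E_P[h] ∈ [−∞,∞) is well defined since h⁺ ≤ J₀⁺ up to a null set after replacing J₀ by a member below it. -/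
open MeasureTheory Filter Topology

/-- The positive part of an extended real, as an extended nonnegative real. -/
noncomputable def posE (x : EReal) : ENNReal :=
  if x = ⊤ then ⊤ else ENNReal.ofReal x.toReal

lemma posE_mono : Monotone posE := by
  intro x y hxy
  by_cases hy : y = ⊤
  · simp [posE, hy]
  · have hx : x ≠ ⊤ := fun hh => hy (top_le_iff.mp (hh ▸ hxy))
    by_cases hxb : x = ⊥
    · simp [posE, hx, hxb]
    · simp only [posE, if_neg hx, if_neg hy]
      exact ENNReal.ofReal_le_ofReal (EReal.toReal_le_toReal hxy hxb hy)

lemma posE_surjective : Function.Surjective posE := by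
  intro y
  by_cases hy : y = ⊤
  · exact ⟨⊤, by simp [posE, hy]⟩
  · refine ⟨((y.toReal : ℝ) : EReal), ?_⟩
    simp [posE, ENNReal.ofReal_toReal hy]

lemma continuous_posE : Continuous posE :=
  posE_mono.continuous_of_surjective posE_surjective

lemma measurable_posE : Measurable posE := continuous_posE.measurable

noncomputable def phi (x : EReal) : ENNReal :=
  EReal.exp (-x) ⊓ 1 + (1 - EReal.exp x ⊓ 1)

lemma continuous_phi : Continuous phi := by
  refine Continuous.add ?_ ?_
  · exact (ENNReal.continuous_exp.comp continuous_neg).min continuous_const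
  · exact (ENNReal.continuous_sub_left ENNReal.one_ne_top).comp
      (ENNReal.continuous_exp.min continuous_const)

lemma phi_le_two (x : EReal) : phi x ≤ 2 := by
  have h1 : EReal.exp (-x) ⊓ 1 ≤ 1 := min_le_right _ _
  have h2 : (1 : ENNReal) - EReal.exp x ⊓ 1 ≤ 1 := tsub_le_self
  calc phi x ≤ 1 + 1 := add_le_add h1 h2
  _ = 2 := one_add_one_eq_two

lemma phi_strictAnti : StrictAnti phi := by
  intro x y hxy
  have hA : EReal.exp (-y) ⊓ 1 ≤ EReal.exp (-x) ⊓ 1 :=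
    min_le_min (EReal.exp_monotone (EReal.neg_le_neg_iff.mpr hxy.le)) le_rfl
  have hB : (1 : ENNReal) - EReal.exp y ⊓ 1 ≤ 1 - EReal.exp x ⊓ 1 :=
    tsub_le_tsub_left (min_le_min (EReal.exp_monotone hxy.le) le_rfl) 1
  rcases le_or_gt 0 x with hx | hx
  · -- first summand strict
    have hy0 : (0 : EReal) ≤ y := hx.trans hxy.le
    have e1 : EReal.exp (-y) ≤ 1 := EReal.exp_le_one_iff.mpr (by
      rw [← neg_zero]; exact EReal.neg_le_neg_iff.mpr hy0)
    have e2 : EReal.exp (-x) ≤ 1 := EReal.exp_le_one_iff.mpr (by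
      rw [← neg_zero]; exact EReal.neg_le_neg_iff.mpr hx)
    have hAlt : EReal.exp (-y) ⊓ 1 < EReal.exp (-x) ⊓ 1 := by
      rw [min_eq_left e1, min_eq_left e2]
      exact EReal.exp_strictMono (EReal.neg_strictAnti hxy)
    calc phi y ≤ EReal.exp (-y) ⊓ 1 + (1 - EReal.exp x ⊓ 1) := add_le_add_right hB _
    _ < EReal.exp (-x) ⊓ 1 + (1 - EReal.exp x ⊓ 1) :=
        ENNReal.add_lt_add_right ((tsub_le_self.trans_lt ENNReal.one_lt_top).ne) hAlt
    _ = phi x := rfl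
  · rcases le_or_gt y 0 with hy | hy
    · -- second summand strict
      have ex : EReal.exp x < 1 := EReal.exp_lt_one_iff.mpr hx
      have ey : EReal.exp y ≤ 1 := EReal.exp_le_one_iff.mpr hy
      have hBlt : (1 : ENNReal) - EReal.exp y ⊓ 1 < 1 - EReal.exp x ⊓ 1 := by
        rw [min_eq_left ey, min_eq_left ex.le]
        exact ((ENNReal.cancel_of_ne ENNReal.one_ne_top).tsub_lt_tsub_iff_left_of_le
          (ENNReal.cancel_of_ne (ne_top_of_le_ne_top ENNReal.one_ne_top ey)) ey).mpr
          (EReal.exp_strictMono hxy)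
      calc phi y ≤ EReal.exp (-x) ⊓ 1 + (1 - EReal.exp y ⊓ 1) := add_le_add_left hA _
      _ < EReal.exp (-x) ⊓ 1 + (1 - EReal.exp x ⊓ 1) :=
          ENNReal.add_lt_add_left ((min_le_right _ _).trans_lt ENNReal.one_lt_top).ne hBlt
      _ = phi x := rfl
    · -- x < 0 < y : first summand strict
      have h1 : EReal.exp (-y) < 1 := EReal.exp_lt_one_iff.mpr (by
        rw [← neg_zero]; exact EReal.neg_strictAnti hy)
      have h2 : (1 : ENNReal) ≤ EReal.exp (-x) := EReal.one_le_exp_iff.mpr (by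
        rw [← neg_zero]; exact (EReal.neg_strictAnti hx).le)
      have hAlt : EReal.exp (-y) ⊓ 1 < EReal.exp (-x) ⊓ 1 := by
        rw [min_eq_left h1.le, min_eq_right h2]
        exact h1
      calc phi y ≤ EReal.exp (-y) ⊓ 1 + (1 - EReal.exp x ⊓ 1) := add_le_add_right hB _
      _ < EReal.exp (-x) ⊓ 1 + (1 - EReal.exp x ⊓ 1) :=
          ENNReal.add_lt_add_right ((tsub_le_self.trans_lt ENNReal.one_lt_top).ne) hAlt
      _ = phi x := rfl


/-- The extended expectation `E_P[X] ∈ [−∞,∞]` of an extended-real random variable: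
lintegral of the positive part minus lintegral of the negative part. -/
noncomputable def eExp {Ω : Type*} [MeasurableSpace Ω] (P : Measure Ω)
    (X : Ω → EReal) : EReal :=
  ((∫⁻ ω, posE (X ω) ∂P : ENNReal) : EReal)
    - ((∫⁻ ω, posE (-(X ω)) ∂P : ENNReal) : EReal)

lemma eExp_mono {Ω : Type*} [MeasurableSpace Ω] (P : Measure Ω)
    {f g : Ω → EReal} (h : f ≤ᵐ[P] g) : eExp P f ≤ eExp P g := by
  refine EReal.sub_le_sub ?_ ?_
  · exact EReal.coe_ennreal_le_coe_ennreal_iff.mpr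
      (lintegral_mono_ae (h.mono fun ω hω => posE_mono hω))
  · exact EReal.coe_ennreal_le_coe_ennreal_iff.mpr
      (lintegral_mono_ae (h.mono fun ω hω => posE_mono (EReal.neg_le_neg_iff.mpr hω)))
/-- A nonempty downward-directed family `𝒥` of measurable functions
`Ω → (−∞,∞]`, each with integrable negative part and containing a member of finite
expectation, admits a `P`-a.s. nonincreasing sequence whose a.s. pointwise limit `h`
is the essential infimum of `𝒥` and satisfies `E_P[h] = inf_{J ∈ 𝒥} E_P[J]`. -/
theorem statement1 {Ω : Type*} [MeasurableSpace Ω]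
    (P : Measure Ω) [IsProbabilityMeasure P]
    (𝒥 : Set (Ω → EReal)) (h𝒥ne : 𝒥.Nonempty)
    (hmeas : ∀ J ∈ 𝒥, Measurable J)
    (hnobot : ∀ J ∈ 𝒥, ∀ ω, J ω ≠ ⊥)
    (hdir : ∀ J₁ ∈ 𝒥, ∀ J₂ ∈ 𝒥, ∃ J₃ ∈ 𝒥, ∀ᵐ ω ∂P, J₃ ω ≤ min (J₁ ω) (J₂ ω))
    (hneg : ∀ J ∈ 𝒥, ∫⁻ ω, posE (-(J ω)) ∂P < ⊤)
    (hfin : ∃ J₀ ∈ 𝒥, eExp P J₀ < ⊤) :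
    ∃ (Js : ℕ → Ω → EReal) (h : Ω → EReal),
      (∀ n, Js n ∈ 𝒥) ∧
      (∀ᵐ ω ∂P, ∀ n, Js (n + 1) ω ≤ Js n ω) ∧
      (∀ᵐ ω ∂P, Tendsto (fun n => Js n ω) atTop (nhds (h ω))) ∧
      (∀ J ∈ 𝒥, ∀ᵐ ω ∂P, h ω ≤ J ω) ∧
      (∀ h' : Ω → EReal, Measurable h' →
        (∀ J ∈ 𝒥, ∀ᵐ ω ∂P, h' ω ≤ J ω) → ∀ᵐ ω ∂P, h' ω ≤ h ω) ∧
      eExp P h = ⨅ J ∈ 𝒥, eExp P J := by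
  classical
  obtain ⟨J₀, hJ₀mem, hJ₀fin⟩ := hfin
  have hC : ∫⁻ ω, posE (J₀ ω) ∂P ≠ ⊤ := by
    intro hCtop
    rw [eExp, hCtop, EReal.coe_ennreal_top, sub_eq_add_neg,
      EReal.top_add_of_ne_bot] at hJ₀fin
    · exact (lt_irrefl _ hJ₀fin)
    · simp only [ne_eq, EReal.neg_eq_bot_iff, EReal.coe_ennreal_eq_top_iff]
      exact (hneg J₀ hJ₀mem).ne
  set S : Set ENNReal := (fun J : Ω → EReal => ∫⁻ ω, phi (J ω) ∂P) '' 𝒥 with hS_def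
  obtain ⟨u, hu_mono, hu_tendsto, hu_mem⟩ :=
    exists_seq_tendsto_sSup (h𝒥ne.image _) (OrderTop.bddAbove S)
  have hle_s : ∀ J ∈ 𝒥, ∫⁻ ω, phi (J ω) ∂P ≤ sSup S := fun J hJ => le_sSup ⟨J, hJ, rfl⟩
  have hmemS : ∀ n, ∃ J, J ∈ 𝒥 ∧ (∫⁻ ω, phi (J ω) ∂P) = u n := fun n => hu_mem n
  choose K hKmem hKval using hmemS
  have hstep : ∀ (p : {J // J ∈ 𝒥}) (n : ℕ),
      ∃ q : {J // J ∈ 𝒥}, ∀ᵐ ω ∂P, q.1 ω ≤ min (p.1 ω) (K n ω) := by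
    intro p n
    obtain ⟨J₃, h₃, hle⟩ := hdir p.1 p.2 (K n) (hKmem n)
    exact ⟨⟨J₃, h₃⟩, hle⟩
  choose step hstepP using hstep
  let Jseq : ℕ → {J // J ∈ 𝒥} := fun n => Nat.rec ⟨J₀, hJ₀mem⟩ (fun n p => step p n) n
  set Js : ℕ → Ω → EReal := fun n => (Jseq n).1 with hJs_def
  have hJsmem : ∀ n, Js n ∈ 𝒥 := fun n => (Jseq n).2
  have hJs0 : Js 0 = J₀ := rfl
  have hJs_succ : ∀ n, ∀ᵐ ω ∂P, Js (n + 1) ω ≤ min (Js n ω) (K n ω) :=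
    fun n => hstepP (Jseq n) n
  have hae : ∀ᵐ ω ∂P, ∀ n, Js (n + 1) ω ≤ min (Js n ω) (K n ω) := ae_all_iff.mpr hJs_succ
  set h : Ω → EReal := fun ω => ⨅ n, Js n ω with hh_def
  have hmeasJs : ∀ n, Measurable (Js n) := fun n => hmeas _ (hJsmem n)
  have hmeash : Measurable h := Measurable.iInf hmeasJs
  have h_anti : ∀ᵐ ω ∂P, Antitone fun n => Js n ω :=
    hae.mono fun ω hω => antitone_nat_of_succ_le fun n => (hω n).trans (min_le_left _ _)
  have h_tend : ∀ᵐ ω ∂P, Tendsto (fun n => Js n ω) atTop (𝓝 (h ω)) :=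
    h_anti.mono fun ω hω => tendsto_atTop_iInf hω
  have hphi_meas : ∀ (f : Ω → EReal), Measurable f → Measurable fun ω => phi (f ω) :=
    fun f hf => continuous_phi.measurable.comp hf
  have hphi_int_le : ∀ f : Ω → EReal, ∫⁻ ω, phi (f ω) ∂P ≤ 2 := fun f => by
    calc ∫⁻ ω, phi (f ω) ∂P ≤ ∫⁻ _, 2 ∂P := lintegral_mono fun ω => phi_le_two _
    _ = 2 := by simp
  have hphi_tendsto : Tendsto (fun n => ∫⁻ ω, phi (Js n ω) ∂P) atTop
      (𝓝 (∫⁻ ω, phi (h ω) ∂P)) := by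
    refine lintegral_tendsto_of_tendsto_of_monotone
      (fun n => (hphi_meas _ (hmeasJs n)).aemeasurable) ?_ ?_
    · exact h_anti.mono fun ω hω i j hij => phi_strictAnti.antitone (hω hij)
    · exact h_tend.mono fun ω hω => (continuous_phi.tendsto _).comp hω
  have hmono_int : Monotone fun n => ∫⁻ ω, phi (Js n ω) ∂P :=
    monotone_nat_of_le_succ fun n => lintegral_mono_ae
      ((hJs_succ n).mono fun ω hω => phi_strictAnti.antitone (hω.trans (min_le_left _ _)))
  have h_int_h_eq : ∫⁻ ω, phi (h ω) ∂P = sSup S := by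
    refine le_antisymm
      (le_of_tendsto hphi_tendsto (Eventually.of_forall fun n => hle_s _ (hJsmem n))) ?_
    refine le_of_tendsto hu_tendsto (Eventually.of_forall fun n => ?_)
    rw [← hKval n]
    refine le_trans (lintegral_mono_ae ((hJs_succ n).mono fun ω hω =>
      phi_strictAnti.antitone (hω.trans (min_le_right _ _)))) ?_
    exact hmono_int.ge_of_tendsto hphi_tendsto (n + 1)
  -- property (i)
  have hi : ∀ J ∈ 𝒥, ∀ᵐ ω ∂P, h ω ≤ J ω := by
    intro J hJ
    have hminle : ∀ n, ∫⁻ ω, phi (min (Js n ω) (J ω)) ∂P ≤ sSup S := by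
      intro n
      obtain ⟨L, hL, hLle⟩ := hdir (Js n) (hJsmem n) J hJ
      exact le_trans (lintegral_mono_ae (hLle.mono fun ω hω =>
        phi_strictAnti.antitone hω)) (hle_s L hL)
    have htend2 : Tendsto (fun n => ∫⁻ ω, phi (min (Js n ω) (J ω)) ∂P) atTop
        (𝓝 (∫⁻ ω, phi (min (h ω) (J ω)) ∂P)) := by
      refine lintegral_tendsto_of_tendsto_of_monotone
        (fun n => (hphi_meas _ ((hmeasJs n).min (hmeas J hJ))).aemeasurable) ?_ ?_
      · exact h_anti.mono fun ω hω i j hij =>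
          phi_strictAnti.antitone (min_le_min (hω hij) le_rfl)
      · exact h_tend.mono fun ω hω =>
          (continuous_phi.tendsto _).comp (hω.min tendsto_const_nhds)
    have hle2 : ∫⁻ ω, phi (min (h ω) (J ω)) ∂P ≤ ∫⁻ ω, phi (h ω) ∂P := by
      rw [h_int_h_eq]
      exact le_of_tendsto htend2 (Eventually.of_forall hminle)
    have heq := ae_eq_of_ae_le_of_lintegral_le
      (Eventually.of_forall fun ω => phi_strictAnti.antitone (min_le_left (h ω) (J ω)))
      (ne_top_of_le_ne_top (by norm_num) (hphi_int_le h))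
      (hphi_meas _ (hmeash.min (hmeas J hJ))).aemeasurable hle2
    refine heq.mono fun ω hω => ?_
    have heqω : h ω = min (h ω) (J ω) := phi_strictAnti.injective hω
    rw [heqω]
    exact min_le_right _ _
  -- property (ii)
  have hii : ∀ h' : Ω → EReal, Measurable h' →
      (∀ J ∈ 𝒥, ∀ᵐ ω ∂P, h' ω ≤ J ω) → ∀ᵐ ω ∂P, h' ω ≤ h ω := by
    intro h' _ hle
    have := ae_all_iff.mpr fun n => hle _ (hJsmem n)
    exact this.mono fun ω hω => le_iInf hω
  -- property (iii)
  set A : ENNReal := ∫⁻ ω, posE (h ω) ∂P with hA_def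
  set B : ENNReal := ∫⁻ ω, posE (-(h ω)) ∂P with hB_def
  have hJs_le_J0 : ∀ n, ∀ᵐ ω ∂P, Js n ω ≤ J₀ ω :=
    fun n => h_anti.mono fun ω hω => hω (Nat.zero_le n)
  have hA_tend : Tendsto (fun n => ∫⁻ ω, posE (Js n ω) ∂P) atTop (𝓝 A) := by
    refine tendsto_lintegral_of_dominated_convergence (fun ω => posE (J₀ ω))
      (fun n => measurable_posE.comp (hmeasJs n))
      (fun n => (hJs_le_J0 n).mono fun ω hω => posE_mono hω) hC ?_
    exact h_tend.mono fun ω hω => (continuous_posE.tendsto _).comp hω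
  have hB_tend : Tendsto (fun n => ∫⁻ ω, posE (-(Js n ω)) ∂P) atTop (𝓝 B) := by
    refine lintegral_tendsto_of_tendsto_of_monotone
      (fun n => (measurable_posE.comp (hmeasJs n).neg).aemeasurable) ?_ ?_
    · exact h_anti.mono fun ω hω i j hij => posE_mono (EReal.neg_le_neg_iff.mpr (hω hij))
    · exact h_tend.mono fun ω hω =>
        ((continuous_posE.comp continuous_neg).tendsto _).comp hω
  have hA_ne_top : A ≠ ⊤ := by
    refine ne_top_of_le_ne_top hC (lintegral_mono fun ω => posE_mono ?_)
    exact iInf_le (fun n => Js n ω) 0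
  have heExp_tend : Tendsto (fun n => eExp P (Js n)) atTop (𝓝 (eExp P h)) := by
    have h1 : Tendsto (fun n => ((∫⁻ ω, posE (Js n ω) ∂P : ENNReal) : EReal)) atTop
        (𝓝 ((A : ENNReal) : EReal)) := EReal.tendsto_coe_ennreal.mpr hA_tend
    have h2 : Tendsto (fun n => (-((∫⁻ ω, posE (-(Js n ω)) ∂P : ENNReal) : EReal))) atTop
        (𝓝 (-((B : ENNReal) : EReal))) := (EReal.tendsto_coe_ennreal.mpr hB_tend).neg
    have hcont : ContinuousAt (fun p : EReal × EReal => p.1 + p.2)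
        (((A : ENNReal) : EReal), -((B : ENNReal) : EReal)) := by
      apply EReal.continuousAt_add
      · left
        simp only [ne_eq, EReal.coe_ennreal_eq_top_iff]
        exact hA_ne_top
      · left
        exact EReal.coe_ennreal_ne_bot _
    have hfinal := hcont.tendsto.comp (h1.prodMk_nhds h2)
    simp only [eExp, sub_eq_add_neg]
    exact hfinal
  refine ⟨Js, h, hJsmem, hae.mono (fun ω hω n => (hω n).trans (min_le_left _ _)),
    h_tend, hi, hii, ?_⟩
  refine le_antisymm (le_iInf₂ fun J hJ => eExp_mono P (hi J hJ)) ?_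
  refine ge_of_tendsto heExp_tend (Eventually.of_forall fun n => ?_)
  exact iInf₂_le (Js n) (hJsmem n)
end

section
/- Let (Z_n) be a sequence of nonnegative 𝓕-measurable functions converging P-a.s. to Z, and let b: Ω → [0,∞) be measurable such that the family {Z_n·b : n ∈ ℕ} is uniformly integrable (in particular each Z_n·b ∈ L¹(P)). Let h: Ω → ℝ be measurable with h ≥ −b P-a.s. Then Z·b ∈ L¹(P), each expectation E_P[Z_n·h] and E_P[Z·h] is well defined with values in (−∞,∞] (since (Z_n h)⁻ ≤ Z_n b and (Zh)⁻ ≤ Zb), and liminf_{n→∞} E_P[Z_n·h] ≥ E_P[Z·h]. -/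
open MeasureTheory Filter

/-- The extended expectation `E_P[g] ∈ [−∞,∞]` of a real random variable `g`:
the lintegral of the positive part minus the lintegral of the negative part. -/
noncomputable def eInt {Ω : Type*} [MeasurableSpace Ω] (P : Measure Ω) (g : Ω → ℝ) :
    EReal :=
  ((∫⁻ ω, ENNReal.ofReal (g ω) ∂P : ENNReal) : EReal)
    - ((∫⁻ ω, ENNReal.ofReal (-(g ω)) ∂P : ENNReal) : EReal)

lemma ofReal_split (u v : ℝ) (hu : 0 ≤ u) (hv : 0 ≤ v) :
    ENNReal.ofReal (u - v) + ENNReal.ofReal v = ENNReal.ofReal u + ENNReal.ofReal (v - u) := by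
  rcases le_total u v with H | H
  · rw [ENNReal.ofReal_eq_zero.2 (by linarith : u - v ≤ 0), zero_add,
      ← ENNReal.ofReal_add hu (by linarith : (0:ℝ) ≤ v - u)]
    congr 1; ring
  · rw [ENNReal.ofReal_eq_zero.2 (by linarith : v - u ≤ 0), add_zero,
      ← ENNReal.ofReal_add (by linarith : (0:ℝ) ≤ u - v) hv]
    congr 1; ring

lemma coe_ennreal_eq_toReal {x : ENNReal} (hx : x ≠ ⊤) : (x : EReal) = ((x.toReal : ℝ) : EReal) := by
  conv_lhs => rw [← ENNReal.ofReal_toReal hx]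
  rw [EReal.coe_ennreal_ofReal, max_eq_left ENNReal.toReal_nonneg]

lemma sub_eq_sub_of_add_eq_add {p q a c : ENNReal} (hq : q ≠ ⊤) (hc : c ≠ ⊤)
    (hpc : p + c = a + q) : (p : EReal) - q = (a : EReal) - c := by
  by_cases hp : p = ⊤
  · have ha : a = ⊤ := by
      have : a + q = ⊤ := by rw [← hpc, hp]; simp
      rcases ENNReal.add_eq_top.1 this with h | h
      · exact h
      · exact absurd h hq
    subst hp; subst ha
    rw [EReal.coe_ennreal_top, sub_eq_add_neg, sub_eq_add_neg,
      EReal.top_add_of_ne_bot, EReal.top_add_of_ne_bot]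
    · simp [EReal.neg_eq_bot_iff, EReal.coe_ennreal_eq_top_iff, hc]
    · simp [EReal.neg_eq_bot_iff, EReal.coe_ennreal_eq_top_iff, hq]
  · have ha : a ≠ ⊤ := by
      intro h
      rw [h] at hpc
      have : p + c = ⊤ := by rw [hpc]; simp
      rcases ENNReal.add_eq_top.1 this with h' | h'
      · exact hp h'
      · exact hc h'
    have hreal : p.toReal + c.toReal = a.toReal + q.toReal := by
      rw [← ENNReal.toReal_add hp hc, ← ENNReal.toReal_add ha hq, hpc]
    rw [coe_ennreal_eq_toReal hp, coe_ennreal_eq_toReal hq, coe_ennreal_eq_toReal ha,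
      coe_ennreal_eq_toReal hc, ← EReal.coe_sub, ← EReal.coe_sub]
    norm_cast
    linarith

/-- Fatou-type lemma.  If `Z_n ≥ 0` converge `P`-a.s. to `Z`, the family
`{Z_n · b}` is uniformly integrable (each `Z_n·b ∈ L¹(P)`), and `h ≥ −b` `P`-a.s.,
then `Z·b ∈ L¹(P)`, all expectations `E_P[Z_n·h]`, `E_P[Z·h]` are well defined with
values in `(−∞,∞]` (negative parts have finite integral), and
`liminf_n E_P[Z_n·h] ≥ E_P[Z·h]`. -/
theorem statement4 {Ω : Type*} [MeasurableSpace Ω]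
    (P : Measure Ω) [IsProbabilityMeasure P]
    (Z : ℕ → Ω → ℝ) (hZmeas : ∀ n, Measurable (Z n)) (hZpos : ∀ n, ∀ ω, 0 ≤ Z n ω)
    (Zlim : Ω → ℝ) (hZlimmeas : Measurable Zlim)
    (hconv : ∀ᵐ ω ∂P, Tendsto (fun n => Z n ω) atTop (nhds (Zlim ω)))
    (b : Ω → ℝ) (hbmeas : Measurable b) (hbpos : ∀ ω, 0 ≤ b ω)
    (hZbint : ∀ n, Integrable (fun ω => Z n ω * b ω) P)
    (hUI : Tendsto
      (fun c : ℝ => ⨆ n : ℕ,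
        ∫⁻ ω in {ω | c < |Z n ω * b ω|}, ENNReal.ofReal |Z n ω * b ω| ∂P)
      atTop (nhds 0))
    (h : Ω → ℝ) (hhmeas : Measurable h) (hhb : ∀ᵐ ω ∂P, -(b ω) ≤ h ω) :
    Integrable (fun ω => Zlim ω * b ω) P ∧
    (∀ n, ∫⁻ ω, ENNReal.ofReal (-(Z n ω * h ω)) ∂P < ⊤) ∧
    (∫⁻ ω, ENNReal.ofReal (-(Zlim ω * h ω)) ∂P < ⊤) ∧
    eInt P (fun ω => Zlim ω * h ω)
      ≤ liminf (fun n => eInt P (fun ω => Z n ω * h ω)) atTop := by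
  have hWmeas : ∀ n, Measurable (fun ω => Z n ω * b ω) := fun n => (hZmeas n).mul hbmeas
  have hWlimmeas : Measurable (fun ω => Zlim ω * b ω) := hZlimmeas.mul hbmeas
  have hWconv : ∀ᵐ ω ∂P, Tendsto (fun n => Z n ω * b ω) atTop (nhds (Zlim ω * b ω)) := by
    filter_upwards [hconv] with ω hω
    exact hω.mul tendsto_const_nhds
  have hZlimpos : ∀ᵐ ω ∂P, 0 ≤ Zlim ω := by
    filter_upwards [hconv] with ω hω
    exact ge_of_tendsto' hω fun n => hZpos n ω
  -- measurability of tail sets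
  have htailmeas : ∀ (c : ℝ) (n : ℕ), MeasurableSet {ω | c < |Z n ω * b ω|} := fun c n =>
    measurableSet_lt measurable_const (hWmeas n).abs
  -- uniform bound on L¹ norms
  have hUIbound : ∃ K : ENNReal, K ≠ ⊤ ∧ ∀ n, ∫⁻ ω, (‖Z n ω * b ω‖₊ : ENNReal) ∂P ≤ K := by
    obtain ⟨c, hc, hc0⟩ :=
      ((hUI.eventually_lt_const (by norm_num : (0:ENNReal) < 1)).and
        (eventually_ge_atTop (0:ℝ))).exists
    refine ⟨1 + ENNReal.ofReal c, by simp [ENNReal.ofReal_ne_top], fun n => ?_⟩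
    have hsplit := lintegral_add_compl (fun ω => (‖Z n ω * b ω‖₊ : ENNReal)) (htailmeas c n) (μ := P)
    rw [← hsplit]
    have h1 : ∫⁻ ω in {ω | c < |Z n ω * b ω|}, (‖Z n ω * b ω‖₊ : ENNReal) ∂P ≤ 1 := by
      refine le_trans (le_of_eq (lintegral_congr fun ω => Real.enorm_eq_ofReal_abs _)) ?_
      exact le_trans (le_iSup (fun n => ∫⁻ ω in {ω | c < |Z n ω * b ω|},
        ENNReal.ofReal |Z n ω * b ω| ∂P) n) hc.le
    have h2 : ∫⁻ ω in {ω | c < |Z n ω * b ω|}ᶜ, (‖Z n ω * b ω‖₊ : ENNReal) ∂P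
        ≤ ENNReal.ofReal c := by
      calc ∫⁻ ω in {ω | c < |Z n ω * b ω|}ᶜ, (‖Z n ω * b ω‖₊ : ENNReal) ∂P
          ≤ ∫⁻ _ω in {ω | c < |Z n ω * b ω|}ᶜ, ENNReal.ofReal c ∂P := by
            refine setLIntegral_mono measurable_const fun ω hω => ?_
            rw [← enorm_eq_nnnorm, Real.enorm_eq_ofReal_abs]
            exact ENNReal.ofReal_le_ofReal (not_lt.1 hω)
        _ = ENNReal.ofReal c * P {ω | c < |Z n ω * b ω|}ᶜ := by rw [setLIntegral_const]
        _ ≤ ENNReal.ofReal c * 1 := by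
            exact mul_le_mul_right prob_le_one _
        _ = ENNReal.ofReal c := by rw [mul_one]
    exact add_le_add h1 h2
  obtain ⟨K, hKne, hK⟩ := hUIbound
  -- integrability of the limit
  have hWlimint : Integrable (fun ω => Zlim ω * b ω) P := by
    refine ⟨hWlimmeas.aestronglyMeasurable, ?_⟩
    rw [hasFiniteIntegral_def]
    change ∫⁻ ω, (‖Zlim ω * b ω‖₊ : ENNReal) ∂P < ⊤
    have heq : ∫⁻ ω, (‖Zlim ω * b ω‖₊ : ENNReal) ∂P
        = ∫⁻ ω, liminf (fun n => (‖Z n ω * b ω‖₊ : ENNReal)) atTop ∂P := by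
      apply lintegral_congr_ae
      filter_upwards [hWconv] with ω hω
      exact (ENNReal.tendsto_coe.2 hω.nnnorm).liminf_eq.symm
    rw [heq]
    refine lt_of_le_of_lt (lintegral_liminf_le fun n => (hWmeas n).enorm) ?_
    refine lt_of_le_of_lt (liminf_le_of_frequently_le (Frequently.of_forall fun n => hK n)) ?_
    exact hKne.lt_top
  -- uniform integrability in the mathlib sense
  have hunif : UnifIntegrable (fun n ω => Z n ω * b ω) 1 P := by
    refine unifIntegrable_of le_rfl ENNReal.one_ne_top
      (fun n => (hWmeas n).aestronglyMeasurable) fun ε hε => ?_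
    obtain ⟨c, hc, hc0⟩ :=
      ((hUI.eventually_lt_const (ENNReal.ofReal_pos.2 hε)).and
        (eventually_ge_atTop (0:ℝ))).exists
    refine ⟨⟨c + 1, by linarith⟩, fun n => ?_⟩
    have hsub : {x | (⟨c + 1, by linarith⟩ : NNReal) ≤ ‖Z n x * b x‖₊}
        ⊆ {ω | c < |Z n ω * b ω|} := by
      intro x hx
      have : (c + 1 : ℝ) ≤ ‖Z n x * b x‖ := hx
      simp only [Set.mem_setOf_eq]
      rw [← Real.norm_eq_abs]
      linarith
    have hsetmeas : MeasurableSet {x | (⟨c + 1, by linarith⟩ : NNReal) ≤ ‖Z n x * b x‖₊} := by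
      have hseteq : {x | (⟨c + 1, by linarith⟩ : NNReal) ≤ ‖Z n x * b x‖₊}
          = {x | (c + 1 : ℝ) ≤ |Z n x * b x|} := by
        ext x
        simp only [Set.mem_setOf_eq, ← NNReal.coe_le_coe, coe_nnnorm, Real.norm_eq_abs]
        rfl
      rw [hseteq]
      exact measurableSet_le measurable_const (hWmeas n).abs
    rw [eLpNorm_one_eq_lintegral_enorm]
    calc ∫⁻ x, (‖({x | (⟨c + 1, by linarith⟩ : NNReal) ≤ ‖Z n x * b x‖₊}.indicator
            (fun ω => Z n ω * b ω)) x‖₊ : ENNReal) ∂P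
        = ∫⁻ x in {x | (⟨c + 1, by linarith⟩ : NNReal) ≤ ‖Z n x * b x‖₊},
            ENNReal.ofReal |Z n x * b x| ∂P := by
          rw [← lintegral_indicator hsetmeas]
          apply lintegral_congr fun x => ?_
          rw [nnnorm_indicator_eq_indicator_nnnorm]
          by_cases hx : x ∈ {x | (⟨c + 1, by linarith⟩ : NNReal) ≤ ‖Z n x * b x‖₊}
          · rw [Set.indicator_of_mem hx, Set.indicator_of_mem hx, ← enorm_eq_nnnorm, Real.enorm_eq_ofReal_abs]
          · rw [Set.indicator_of_notMem hx, Set.indicator_of_notMem hx]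
            simp
      _ ≤ ∫⁻ x in {ω | c < |Z n ω * b ω|}, ENNReal.ofReal |Z n x * b x| ∂P :=
          lintegral_mono_set hsub
      _ ≤ ENNReal.ofReal ε := by
          exact le_trans (le_iSup (fun n => ∫⁻ ω in {ω | c < |Z n ω * b ω|},
            ENNReal.ofReal |Z n ω * b ω| ∂P) n) hc.le
  -- Vitali: L¹ convergence and convergence of integrals
  have hL1 : Tendsto (fun n => eLpNorm ((fun ω => Z n ω * b ω) - fun ω => Zlim ω * b ω) 1 P)
      atTop (nhds 0) :=
    tendsto_Lp_finite_of_tendsto_ae le_rfl ENNReal.one_ne_top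
      (fun n => (hWmeas n).aestronglyMeasurable) (memLp_one_iff_integrable.2 hWlimint)
      hunif hWconv
  have hInt : Tendsto (fun n => ∫ ω, Z n ω * b ω ∂P) atTop (nhds (∫ ω, Zlim ω * b ω ∂P)) :=
    tendsto_integral_of_L1' _ hWlimint.aestronglyMeasurable (Eventually.of_forall hZbint) hL1
  -- lintegrals of positive parts of Z·b as ofReal of integrals
  have hBeq : ∀ n, ∫⁻ ω, ENNReal.ofReal (Z n ω * b ω) ∂P
      = ENNReal.ofReal (∫ ω, Z n ω * b ω ∂P) :=
    fun n => (ofReal_integral_eq_lintegral_ofReal (hZbint n)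
      (ae_of_all _ fun ω => mul_nonneg (hZpos n ω) (hbpos ω))).symm
  have hBlimeq : ∫⁻ ω, ENNReal.ofReal (Zlim ω * b ω) ∂P
      = ENNReal.ofReal (∫ ω, Zlim ω * b ω ∂P) := by
    refine (ofReal_integral_eq_lintegral_ofReal hWlimint ?_).symm
    filter_upwards [hZlimpos] with ω hω
    exact mul_nonneg hω (hbpos ω)
  -- finiteness of negative parts
  have hNfin : ∀ (f : Ω → ℝ), (∀ᵐ ω ∂P, 0 ≤ f ω) → Integrable (fun ω => f ω * b ω) P →
      ∫⁻ ω, ENNReal.ofReal (-(f ω * h ω)) ∂P < ⊤ := by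
    intro f hfpos hfint
    have hle : ∫⁻ ω, ENNReal.ofReal (-(f ω * h ω)) ∂P
        ≤ ∫⁻ ω, ENNReal.ofReal (f ω * b ω) ∂P := by
      refine lintegral_mono_ae ?_
      filter_upwards [hhb, hfpos] with ω h1 h2
      refine ENNReal.ofReal_le_ofReal ?_
      have : -(f ω * h ω) = f ω * (-(h ω)) := by ring
      rw [this]
      exact mul_le_mul_of_nonneg_left (by linarith) h2
    refine lt_of_le_of_lt hle ?_
    rw [(ofReal_integral_eq_lintegral_ofReal hfint ?_).symm]
    · exact ENNReal.ofReal_lt_top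
    · filter_upwards [hfpos] with ω hω
      exact mul_nonneg hω (hbpos ω)
  -- key identity for eInt
  have key : ∀ (f : Ω → ℝ), Measurable f → (∀ᵐ ω ∂P, 0 ≤ f ω) →
      Integrable (fun ω => f ω * b ω) P →
      eInt P (fun ω => f ω * h ω) =
        ((∫⁻ ω, ENNReal.ofReal (f ω * (h ω + b ω)) ∂P : ENNReal) : EReal)
          - ((∫⁻ ω, ENNReal.ofReal (f ω * b ω) ∂P : ENNReal) : EReal) := by
    intro f hfmeas hfpos hfint
    have hBfin : ∫⁻ ω, ENNReal.ofReal (f ω * b ω) ∂P ≠ ⊤ := by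
      rw [(ofReal_integral_eq_lintegral_ofReal hfint ?_).symm]
      · exact ENNReal.ofReal_ne_top
      · filter_upwards [hfpos] with ω hω
        exact mul_nonneg hω (hbpos ω)
    have hNfin' : ∫⁻ ω, ENNReal.ofReal (-(f ω * h ω)) ∂P ≠ ⊤ := (hNfin f hfpos hfint).ne
    have hsum : (∫⁻ ω, ENNReal.ofReal (f ω * h ω) ∂P)
          + ∫⁻ ω, ENNReal.ofReal (f ω * b ω) ∂P
        = (∫⁻ ω, ENNReal.ofReal (f ω * (h ω + b ω)) ∂P)
          + ∫⁻ ω, ENNReal.ofReal (-(f ω * h ω)) ∂P := by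
      rw [← lintegral_add_left (f := fun ω => ENNReal.ofReal (f ω * h ω)) ((hfmeas.mul hhmeas).ennreal_ofReal),
        ← lintegral_add_left (f := fun ω => ENNReal.ofReal (f ω * (h ω + b ω))) ((hfmeas.mul (hhmeas.add hbmeas)).ennreal_ofReal)]
      apply lintegral_congr_ae
      filter_upwards [hhb, hfpos] with ω h1 h2
      have hu : 0 ≤ f ω * (h ω + b ω) := mul_nonneg h2 (by linarith)
      have hv : 0 ≤ f ω * b ω := mul_nonneg h2 (hbpos ω)
      have := ofReal_split (f ω * (h ω + b ω)) (f ω * b ω) hu hv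
      rw [show f ω * (h ω + b ω) - f ω * b ω = f ω * h ω by ring,
        show f ω * b ω - f ω * (h ω + b ω) = -(f ω * h ω) by ring] at this
      exact this
    exact sub_eq_sub_of_add_eq_add hNfin' hBfin hsum
  refine ⟨hWlimint, fun n => hNfin (Z n) (ae_of_all _ (hZpos n)) (hZbint n),
    hNfin Zlim hZlimpos hWlimint, ?_⟩
  -- Fatou for the nonnegative parts A
  have hAfatou : (∫⁻ ω, ENNReal.ofReal (Zlim ω * (h ω + b ω)) ∂P)
      ≤ liminf (fun n => ∫⁻ ω, ENNReal.ofReal (Z n ω * (h ω + b ω)) ∂P) atTop := by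
    have heq : ∫⁻ ω, ENNReal.ofReal (Zlim ω * (h ω + b ω)) ∂P
        = ∫⁻ ω, liminf (fun n => ENNReal.ofReal (Z n ω * (h ω + b ω))) atTop ∂P := by
      apply lintegral_congr_ae
      filter_upwards [hconv] with ω hω
      exact ((ENNReal.continuous_ofReal.tendsto _).comp (hω.mul tendsto_const_nhds)).liminf_eq.symm
    rw [heq]
    exact lintegral_liminf_le fun n => ((hZmeas n).mul (hhmeas.add hbmeas)).ennreal_ofReal
  -- Transfer Fatou to EReal
  have hcoemono : Monotone ((↑) : ENNReal → EReal) := fun x y hxy =>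
    EReal.coe_ennreal_le_coe_ennreal_iff.2 hxy
  have hAER : ((∫⁻ ω, ENNReal.ofReal (Zlim ω * (h ω + b ω)) ∂P : ENNReal) : EReal)
      ≤ liminf (fun n =>
          ((∫⁻ ω, ENNReal.ofReal (Z n ω * (h ω + b ω)) ∂P : ENNReal) : EReal)) atTop := by
    have hmap := hcoemono.map_liminf_of_continuousAt
      (F := atTop) (fun n => ∫⁻ ω, ENNReal.ofReal (Z n ω * (h ω + b ω)) ∂P)
      (continuous_coe_ennreal_ereal.continuousAt)
    calc ((∫⁻ ω, ENNReal.ofReal (Zlim ω * (h ω + b ω)) ∂P : ENNReal) : EReal)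
        ≤ ((liminf (fun n => ∫⁻ ω, ENNReal.ofReal (Z n ω * (h ω + b ω)) ∂P) atTop : ENNReal) :
            EReal) := hcoemono hAfatou
      _ = liminf (fun n =>
            ((∫⁻ ω, ENNReal.ofReal (Z n ω * (h ω + b ω)) ∂P : ENNReal) : EReal)) atTop := hmap
  -- convergence of the B parts in EReal
  have hWnonneg : ∀ n, 0 ≤ ∫ ω, Z n ω * b ω ∂P :=
    fun n => integral_nonneg fun ω => mul_nonneg (hZpos n ω) (hbpos ω)
  have hWlimnonneg : 0 ≤ ∫ ω, Zlim ω * b ω ∂P := by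
    refine integral_nonneg_of_ae ?_
    filter_upwards [hZlimpos] with ω hω
    exact mul_nonneg hω (hbpos ω)
  have hBcoe : ∀ n, ((∫⁻ ω, ENNReal.ofReal (Z n ω * b ω) ∂P : ENNReal) : EReal)
      = ((∫ ω, Z n ω * b ω ∂P : ℝ) : EReal) := by
    intro n
    rw [hBeq n, EReal.coe_ennreal_ofReal, max_eq_left (hWnonneg n)]
  have hBlimcoe : ((∫⁻ ω, ENNReal.ofReal (Zlim ω * b ω) ∂P : ENNReal) : EReal)
      = ((∫ ω, Zlim ω * b ω ∂P : ℝ) : EReal) := by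
    rw [hBlimeq, EReal.coe_ennreal_ofReal, max_eq_left hWlimnonneg]
  have hBtend : Tendsto
      (fun n => -(((∫⁻ ω, ENNReal.ofReal (Z n ω * b ω) ∂P : ENNReal)) : EReal)) atTop
      (nhds (-((∫⁻ ω, ENNReal.ofReal (Zlim ω * b ω) ∂P : ENNReal) : EReal))) := by
    simp_rw [hBcoe, hBlimcoe]
    exact (EReal.tendsto_coe.2 hInt).neg
  have hBliminf : liminf
      (fun n => -(((∫⁻ ω, ENNReal.ofReal (Z n ω * b ω) ∂P : ENNReal)) : EReal)) atTop
      = -((∫⁻ ω, ENNReal.ofReal (Zlim ω * b ω) ∂P : ENNReal) : EReal) := hBtend.liminf_eq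
  -- put it together
  rw [key Zlim hZlimmeas hZlimpos hWlimint]
  have hEn : ∀ n, eInt P (fun ω => Z n ω * h ω)
      = ((∫⁻ ω, ENNReal.ofReal (Z n ω * (h ω + b ω)) ∂P : ENNReal) : EReal)
        + -((∫⁻ ω, ENNReal.ofReal (Z n ω * b ω) ∂P : ENNReal) : EReal) := by
    intro n
    rw [key (Z n) (hZmeas n) (ae_of_all _ (hZpos n)) (hZbint n), sub_eq_add_neg]
  calc ((∫⁻ ω, ENNReal.ofReal (Zlim ω * (h ω + b ω)) ∂P : ENNReal) : EReal)
        - ((∫⁻ ω, ENNReal.ofReal (Zlim ω * b ω) ∂P : ENNReal) : EReal)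
      = ((∫⁻ ω, ENNReal.ofReal (Zlim ω * (h ω + b ω)) ∂P : ENNReal) : EReal)
        + -((∫⁻ ω, ENNReal.ofReal (Zlim ω * b ω) ∂P : ENNReal) : EReal) := sub_eq_add_neg _ _
    _ ≤ liminf (fun n =>
          ((∫⁻ ω, ENNReal.ofReal (Z n ω * (h ω + b ω)) ∂P : ENNReal) : EReal)) atTop
        + liminf (fun n =>
          -(((∫⁻ ω, ENNReal.ofReal (Z n ω * b ω) ∂P : ENNReal)) : EReal)) atTop := by
        rw [hBliminf]
        exact add_le_add hAER le_rfl
    _ ≤ liminf (fun n =>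
          ((∫⁻ ω, ENNReal.ofReal (Z n ω * (h ω + b ω)) ∂P : ENNReal) : EReal)
          + -(((∫⁻ ω, ENNReal.ofReal (Z n ω * b ω) ∂P : ENNReal)) : EReal)) atTop :=
        EReal.le_liminf_add
    _ = liminf (fun n => eInt P (fun ω => Z n ω * h ω)) atTop := by
        simp_rw [← hEn]
end
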